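/- Let a, b, w₀ ∈ ℂ, let U ⊆ ℂ be open, and let s : U → ℂ be differentiable with 5s(z)⁴ − 3a·s(z)² + 2ib·s(z) + z = 0 and 20s(z)³ − 6a·s(z) + 2ib ≠ 0 for all z ∈ U. Define χ(z) = (−2a/5)s(z)³ + (3ib/5)s(z)² + (4z/5)s(z) + w₀. Then χ′(z) = s(z) for all z ∈ U. -/

import Mathlib

open Complex

/-- the closed-form singulant is an antiderivative of a
differentiable simple-root branch of the characteristic quartic. -/
theorem swallowtail_singulant_antiderivative (a b w₀ : ℂ) (U : Set ℂ)
    (hU : IsOpen U) (s : ℂ → ℂ)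
    (hdiff : ∀ z ∈ U, DifferentiableAt ℂ s z)
    (hroot : ∀ z ∈ U, 5 * (s z)^4 - 3 * a * (s z)^2 + 2 * I * b * (s z) + z = 0)
    (hsimple : ∀ z ∈ U, 20 * (s z)^3 - 6 * a * (s z) + 2 * I * b ≠ 0)
    (χ : ℂ → ℂ)
    (hχ : ∀ z, χ z = (-2 * a / 5) * (s z)^3 + (3 * I * b / 5) * (s z)^2
        + (4 * z / 5) * (s z) + w₀) :
    ∀ z ∈ U, deriv χ z = s z := by
  intro z hz
  set c := deriv s z with hc
  have hs : HasDerivAt s c z := (hdiff z hz).hasDerivAt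
  -- the quartic function is locally zero
  have hF : HasDerivAt (fun w => 5 * (s w)^4 - 3 * a * (s w)^2 + 2 * I * b * (s w) + w)
      ((20 * (s z)^3 - 6 * a * (s z) + 2 * I * b) * c + 1) z := by
    have h1 : HasDerivAt (fun w => 5 * (s w)^4 - 3 * a * (s w)^2 + 2 * I * b * (s w) + w)
        (5 * (4 * (s z)^3 * c) - 3 * a * (2 * (s z)^1 * c) + 2 * I * b * c + 1) z := by
      exact ((((hs.pow 4).const_mul 5).sub ((hs.pow 2).const_mul (3*a))).add
        ((hs.const_mul (2*I*b)))).add (hasDerivAt_id z)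
    convert h1 using 1; ring
  have hzero : (fun w => 5 * (s w)^4 - 3 * a * (s w)^2 + 2 * I * b * (s w) + w)
      =ᶠ[nhds z] (fun _ => (0:ℂ)) :=
    Filter.eventuallyEq_of_mem (hU.mem_nhds hz) (fun w hw => hroot w hw)
  have hF0 : HasDerivAt (fun w => 5 * (s w)^4 - 3 * a * (s w)^2 + 2 * I * b * (s w) + w)
      0 z := (hasDerivAt_const z (0:ℂ)).congr_of_eventuallyEq hzero
  have key : (20 * (s z)^3 - 6 * a * (s z) + 2 * I * b) * c + 1 = 0 :=
    hF.unique hF0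
  -- derivative of χ
  have hχfun : χ = fun w => (-2 * a / 5) * (s w)^3 + (3 * I * b / 5) * (s w)^2
      + (4 * w / 5) * (s w) + w₀ := funext hχ
  have hχd : HasDerivAt χ
      ((-2 * a / 5) * (3 * (s z)^2 * c) + (3 * I * b / 5) * (2 * (s z)^1 * c)
        + ((4 / 5) * (s z) + (4 * z / 5) * c) + 0) z := by
    rw [hχfun]
    refine ((((hs.pow 3).const_mul _).add ((hs.pow 2).const_mul _)).add ?_).add
      (hasDerivAt_const z w₀)
    have : HasDerivAt (fun w => (4 * w / 5) * (s w))
        ((4 / 5) * (s z) + (4 * z / 5) * c) z := by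
      have h4 : HasDerivAt (fun w : ℂ => 4 * w / 5) (4 / 5) z := by
        have := ((hasDerivAt_id z).const_mul (4:ℂ)).div_const 5
        simpa using this
      exact h4.mul hs
    exact this
  rw [hχd.deriv]
  have hr := hroot z hz
  -- derive what c is
  have hD := hsimple z hz
  linear_combination (-(s z)/5) * key + (4*c/5) * hr
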